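/- Let w̄ = ∑ j, w j and let ȳ ∈ ℝ with N ≤ ȳ < N + μ, and define x : Fin N → ℝ by x i = (w i/w̄) * ȳ − 1. Then ∑ i, x i = ȳ − N, and x satisfies the first-order conditions (for every i, w i/(1 + x i) − r − 1/(μ − ∑ j, x j)² = 0) if and only if L̃(ȳ) = 0, where L̃(ȳ) = w̄/ȳ − r − 1/(μ + N − ȳ)². -/

import Mathlib

/-- For `x i = (w i / w̄) * ȳ - 1` with `N ≤ ȳ < N + μ`, one has
`∑ i, x i = ȳ - N`, and `x` satisfies the first-order conditions iff
`L̃(ȳ) = w̄/ȳ - r - 1/(μ + N - ȳ)² = 0`. -/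
theorem first_order_conditions_iff_Ltilde_eq_zero
    (N : ℕ) (hN : 0 < N) (μ r : ℝ) (hμ : 0 < μ) (hr : 0 < r)
    (w : Fin N → ℝ) (hw : ∀ i, 0 < w i)
    (wbar : ℝ) (hwbar : wbar = ∑ j, w j)
    (ybar : ℝ) (hy1 : (N : ℝ) ≤ ybar) (hy2 : ybar < (N : ℝ) + μ)
    (x : Fin N → ℝ) (hx : ∀ i, x i = (w i / wbar) * ybar - 1) :
    (∑ i, x i) = ybar - N ∧
    ((∀ i, w i / (1 + x i) - r - 1 / (μ - ∑ j, x j) ^ 2 = 0) ↔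
      wbar / ybar - r - 1 / (μ + (N : ℝ) - ybar) ^ 2 = 0) := by
  have hwb : 0 < wbar := by
    rw [hwbar]
    exact Finset.sum_pos (fun i _ => hw i) (by simp [Finset.univ_nonempty_iff, Fin.pos_iff_nonempty.mp hN])
  have hyb : 0 < ybar := lt_of_lt_of_le (by exact_mod_cast hN) hy1
  have hsum : (∑ i, x i) = ybar - N := by
    have h1 : ∑ i, (w i / wbar * ybar) = ybar := by
      rw [← Finset.sum_mul, ← Finset.sum_div, ← hwbar, div_self hwb.ne', one_mul]
    simp only [hx]
    rw [Finset.sum_sub_distrib, h1]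
    simp
  refine ⟨hsum, ?_⟩
  have hkey : ∀ i, w i / (1 + x i) = wbar / ybar := by
    intro i
    rw [hx i]
    have : 1 + (w i / wbar * ybar - 1) = w i / wbar * ybar := by ring
    rw [this]
    field_simp [(hw i).ne', hyb.ne']
  have hmu : μ - (∑ j, x j) = μ + N - ybar := by rw [hsum]; ring
  constructor
  · intro h
    have i0 : Fin N := ⟨0, hN⟩
    have := h i0
    rwa [hkey i0, hmu] at this
  · intro h i
    rw [hkey i, hmu]
    exact h
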